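/- In the NE algorithm with lazy edge removal, no edge is assigned to two different partitions: for every execution, the sets of edges assigned by distinct MoveToSecondary operations are pairwise disjoint, so each edge of G is assigned to at most one partition p_i. In particular, it is never necessary to delete assigned edges from the adjacency lists of vertices that were moved to the core set C; removing, at the end of each phase i, only the entries u ∈ C ∪ S_i from the adjacency lists of vertices v ∈ S_i suffices to prevent any double assignment. -/

import Mathlib

/-!
Model of the NE algorithm with *lazy edge removal*.

A state consists of the core set `C`, secondary sets `S_1, …, S_k`,
assigned-edge sets `p_1, …, p_k` and a working adjacency structure
(initially the adjacency lists of `G`).  During phase `i` the operations are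
`MoveToSecondary_i(u)` (requires `u ∉ C ∪ S_i`, adds `u` to `S_i` and assigns
every edge `{u, w}` with `w` currently in `u`'s working adjacency list and
`w ∈ C ∪ S_i` to some partition) and `MoveToCore_i(v)` (requires `v ∉ C`,
adds `v` to `C`; the cascaded `MoveToSecondary_i` calls appear as explicit
operations of the execution).  No adjacency-list entries are deleted during a
phase; instead, at the end of each phase `i` a clean-up operation deletes,
for every `v ∈ S_i`, every entry `u ∈ C ∪ S_i` from `v`'s working adjacency
list.  An execution consists, for each phase `i = 1, …, k` in order, of a
block of phase-`i` operations followed by the clean-up of phase `i`.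
-/

/-- An operation of the NE algorithm with lazy edge removal. -/
inductive LOp (V : Type*) (k : ℕ) where
  | secondary (i : Fin k) (v : V)
  | core (i : Fin k) (v : V)
  | cleanup (i : Fin k)
  deriving DecidableEq

/-- The phase of an operation. -/
def LOp.phase {V : Type*} {k : ℕ} : LOp V k → Fin k
  | .secondary i _ => i
  | .core i _ => i
  | .cleanup i => i

/-- Whether an operation is a clean-up operation. -/
def LOp.isCleanup {V : Type*} {k : ℕ} : LOp V k → Bool
  | .secondary _ _ => false
  | .core _ _ => false
  | .cleanup _ => true

/-- A state: core set, secondary sets, assigned-edge sets (`part i` models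
`p_i`), and the working adjacency structure. -/
structure LState (V : Type*) (k : ℕ) where
  core : Finset V
  sec : Fin k → Finset V
  part : Fin k → Finset (Sym2 V)
  adj : V → Finset V

variable {V : Type*} [DecidableEq V] [Fintype V]

/-- The initial state: `C`, all `S_i` and all `p_i` are empty, and the
working adjacency structure equals the adjacency lists of `G`. -/
def LState.init (G : SimpleGraph V) [DecidableRel G.Adj] (k : ℕ) :
    LState V k :=
  ⟨∅, fun _ => ∅, fun _ => ∅, fun v => G.neighborFinset v⟩

/-- The set of edges assigned by the operation `MoveToSecondary_i(u)` when it
is executed in state `σ`: all edges `{u, w}` with `w` currently in `u`'s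
working adjacency list and `w ∈ C ∪ S_i`. -/
def assignedEdges {k : ℕ} (σ : LState V k) (i : Fin k) (u : V) :
    Finset (Sym2 V) :=
  (σ.adj u ∩ (σ.core ∪ σ.sec i)).image fun w => s(u, w)

/-- The transition relation of the NE algorithm with lazy edge removal.  In a
`secondary` step, the function `f` chooses, for each newly assigned edge
`{u, w}`, the partition it is assigned to ("to some partition"). -/
inductive LStep {k : ℕ} : LState V k → LOp V k → LState V k → Prop
  | secondary (σ : LState V k) (i : Fin k) (u : V) (f : V → Fin k)
      (hu : u ∉ σ.core ∪ σ.sec i) :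
      LStep σ (.secondary i u)
        { core := σ.core,
          sec := Function.update σ.sec i (insert u (σ.sec i)),
          part := fun j => σ.part j ∪
            (((σ.adj u ∩ (σ.core ∪ σ.sec i)).filter fun w => f w = j).image
              fun w => s(u, w)),
          adj := σ.adj }
  | core (σ : LState V k) (i : Fin k) (v : V) (hv : v ∉ σ.core) :
      LStep σ (.core i v) { σ with core := insert v σ.core }
  | cleanup (σ : LState V k) (i : Fin k) :
      LStep σ (.cleanup i)
        { σ with adj := fun v =>
            if v ∈ σ.sec i then σ.adj v \ (σ.core ∪ σ.sec i) else σ.adj v }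

/-- `LExec σ ops σ'` : starting in state `σ`, performing the sequence of
operations `ops` leads to state `σ'`. -/
inductive LExec {k : ℕ} : LState V k → List (LOp V k) → LState V k → Prop
  | nil (σ : LState V k) : LExec σ [] σ
  | cons {σ σ' σ'' : LState V k} {op : LOp V k} {ops : List (LOp V k)} :
      LStep σ op σ' → LExec σ' ops σ'' → LExec σ (op :: ops) σ''

set_option linter.unusedSectionVars false

section Aux

variable {k : ℕ}

/-! ### Monotonicity of states along steps and executions -/

theorem LStep.core_mono {σ τ : LState V k} {op : LOp V k} (h : LStep σ op τ) :
    σ.core ⊆ τ.core := by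
  cases h with
  | secondary i u f hu => exact subset_rfl
  | core i v hv => exact Finset.subset_insert _ _
  | cleanup i => exact subset_rfl

theorem LStep.sec_mono {σ τ : LState V k} {op : LOp V k} (h : LStep σ op τ) (j : Fin k) :
    σ.sec j ⊆ τ.sec j := by
  cases h with
  | secondary i u f hu =>
      show σ.sec j ⊆ Function.update σ.sec i (insert u (σ.sec i)) j
      rcases eq_or_ne j i with rfl | hj
      · rw [Function.update_self]; exact Finset.subset_insert _ _
      · rw [Function.update_of_ne hj]
  | core i v hv => exact subset_rfl
  | cleanup i => exact subset_rfl

theorem LStep.adj_anti {σ τ : LState V k} {op : LOp V k} (h : LStep σ op τ) (v : V) :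
    τ.adj v ⊆ σ.adj v := by
  cases h with
  | secondary i u f hu => exact subset_rfl
  | core i w hv => exact subset_rfl
  | cleanup i =>
      show (if v ∈ σ.sec i then σ.adj v \ (σ.core ∪ σ.sec i) else σ.adj v) ⊆ σ.adj v
      split
      · exact Finset.sdiff_subset
      · exact subset_rfl

theorem LExec.core_mono {σ τ : LState V k} {l : List (LOp V k)} (h : LExec σ l τ) :
    σ.core ⊆ τ.core := by
  induction h with
  | nil => exact subset_rfl
  | cons hs _ ih => exact hs.core_mono.trans ih

theorem LExec.sec_mono {σ τ : LState V k} {l : List (LOp V k)} (h : LExec σ l τ) (j : Fin k) :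
    σ.sec j ⊆ τ.sec j := by
  induction h with
  | nil => exact subset_rfl
  | cons hs _ ih => exact (hs.sec_mono j).trans ih

theorem LExec.adj_anti {σ τ : LState V k} {l : List (LOp V k)} (h : LExec σ l τ) (v : V) :
    τ.adj v ⊆ σ.adj v := by
  induction h with
  | nil => exact subset_rfl
  | cons hs _ ih => exact ih.trans (hs.adj_anti v)

/-! ### Determinism up to the partition assignments -/

/-- Two states agree on core, secondary sets and adjacency. -/
def SEqv (σ σ' : LState V k) : Prop :=
  σ.core = σ'.core ∧ σ.sec = σ'.sec ∧ σ.adj = σ'.adj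

theorem LStep.seqv {σ σ' τ τ' : LState V k} {op : LOp V k} (h : LStep σ op τ)
    (h' : LStep σ' op τ') (e : SEqv σ σ') : SEqv τ τ' := by
  obtain ⟨e1, e2, e3⟩ := e
  cases h with
  | secondary i u f hu =>
      cases h' with
      | secondary _ _ f' hu' => exact ⟨e1, by rw [e2], e3⟩
  | core i v hv =>
      cases h' with
      | core _ _ hv' => exact ⟨by rw [e1], e2, e3⟩
  | cleanup i =>
      cases h' with
      | cleanup _ => exact ⟨e1, e2, by rw [e1, e2, e3]⟩

theorem LExec.seqv {l : List (LOp V k)} :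
    ∀ {σ σ' τ τ' : LState V k}, LExec σ l τ → LExec σ' l τ' → SEqv σ σ' → SEqv τ τ' := by
  induction l with
  | nil => intro σ σ' τ τ' h h' e; cases h; cases h'; exact e
  | cons op l ih =>
      intro σ σ' τ τ' h h' e
      cases h with
      | cons hs he =>
          cases h' with
          | cons hs' he' => exact ih he he' (hs.seqv hs' e)

/-! ### Splitting and concatenating executions -/

theorem LExec.append_split {σ τ : LState V k} {l₁ l₂ : List (LOp V k)}
    (h : LExec σ (l₁ ++ l₂) τ) : ∃ σ', LExec σ l₁ σ' ∧ LExec σ' l₂ τ := by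
  induction l₁ generalizing σ with
  | nil => exact ⟨σ, .nil σ, h⟩
  | cons op l ih =>
      cases h with
      | cons hs he =>
          obtain ⟨σ', h1, h2⟩ := ih he
          exact ⟨σ', .cons hs h1, h2⟩

theorem LExec.append {σ σ' τ : LState V k} {l₁ l₂ : List (LOp V k)}
    (h1 : LExec σ l₁ σ') (h2 : LExec σ' l₂ τ) : LExec σ (l₁ ++ l₂) τ := by
  induction h1 with
  | nil => exact h2
  | cons hs _ ih => exact .cons hs (ih h2)

/-! ### Basic facts about individual steps -/

theorem LStep.secondary_spec {σ τ : LState V k} {i : Fin k} {u : V}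
    (h : LStep σ (.secondary i u) τ) :
    u ∉ σ.core ∪ σ.sec i ∧ u ∈ τ.sec i := by
  cases h with
  | secondary _ _ f hu =>
      refine ⟨hu, ?_⟩
      show u ∈ Function.update σ.sec i (insert u (σ.sec i)) i
      rw [Function.update_self]
      exact Finset.mem_insert_self _ _

theorem LStep.cleanup_spec {σ τ : LState V k} {i : Fin k} (h : LStep σ (.cleanup i) τ) :
    ∀ v ∈ σ.sec i, τ.adj v = σ.adj v \ (σ.core ∪ σ.sec i) := by
  cases h with
  | cleanup _ => intro v hv; simp only [if_pos hv]

theorem assignedEdges_congr {σ σ' : LState V k} (e : SEqv σ σ') (i : Fin k) (u : V) :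
    assignedEdges σ i u = assignedEdges σ' i u := by
  obtain ⟨e1, e2, e3⟩ := e
  unfold assignedEdges
  rw [e1, e2, e3]

end Aux
section ListPart

variable {k : ℕ}

/-- Ordering key on operations: earlier phases come first, and within a phase
the clean-up comes last. -/
def opLE (a b : LOp V k) : Prop :=
  a.phase < b.phase ∨ (a.phase = b.phase ∧ (a.isCleanup = true → b.isCleanup = true))

theorem phase_of_mem_seg {blocks : Fin k → List (LOp V k)}
    (hblocks : ∀ i : Fin k, ∀ op ∈ blocks i, op.phase = i ∧ op.isCleanup = false)
    {i : Fin k} {op : LOp V k} (h : op ∈ blocks i ++ [LOp.cleanup i]) : op.phase = i := by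
  rcases List.mem_append.mp h with h | h
  · exact (hblocks i op h).1
  · rw [List.mem_singleton.mp h]; rfl

theorem pairwise_ops (blocks : Fin k → List (LOp V k))
    (hblocks : ∀ i : Fin k, ∀ op ∈ blocks i, op.phase = i ∧ op.isCleanup = false) :
    ((List.finRange k).flatMap fun i => blocks i ++ [LOp.cleanup i]).Pairwise
      (opLE (V := V)) := by
  have hgen : ∀ L : List (Fin k), L.Pairwise (· < ·) →
      (L.flatMap fun i => blocks i ++ [LOp.cleanup i]).Pairwise (opLE (V := V)) := by
    intro L hL
    induction L with
    | nil => simp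
    | cons i L ih =>
        rw [List.flatMap_cons, List.pairwise_append]
        refine ⟨?_, ih (List.Pairwise.of_cons hL), ?_⟩
        · rw [List.pairwise_append]
          refine ⟨List.pairwise_of_forall_mem_list ?_, List.pairwise_singleton _ _, ?_⟩
          · intro a ha b hb
            exact Or.inr ⟨(hblocks i a ha).1.trans (hblocks i b hb).1.symm,
              fun h => absurd ((hblocks i a ha).2) (by rw [h]; simp)⟩
          · intro a ha b hb
            rw [List.mem_singleton.mp hb]
            exact Or.inr ⟨(hblocks i a ha).1, fun h => rfl⟩
        · intro a ha b hb
          obtain ⟨j, hj, hbj⟩ := List.mem_flatMap.mp hb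
          refine Or.inl ?_
          rw [phase_of_mem_seg hblocks ha, phase_of_mem_seg hblocks hbj]
          exact (List.pairwise_cons.mp hL).1 j hj
  exact hgen _ (List.pairwise_lt_finRange k)

theorem rel_of_decomp {α : Type*} {R : α → α → Prop} {L x y : List α} {a : α}
    (hp : L.Pairwise R) (h : L = x ++ a :: y) : ∀ b ∈ y, R a b := by
  subst h
  exact (List.pairwise_cons.mp (List.pairwise_append.mp hp).2.1).1

theorem cleanup_between {blocks : Fin k → List (LOp V k)}
    (hblocks : ∀ i : Fin k, ∀ op ∈ blocks i, op.phase = i ∧ op.isCleanup = false)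
    {l₁ l₂ l₃ : List (LOp V k)} {i i' : Fin k} {u u' : V}
    (h : ((List.finRange k).flatMap fun i => blocks i ++ [LOp.cleanup i]) =
      l₁ ++ LOp.secondary i u :: (l₂ ++ LOp.secondary i' u' :: l₃))
    (hne : i ≠ i') : ∃ a b, l₂ = a ++ LOp.cleanup i :: b := by
  have hp := pairwise_ops blocks hblocks
  have hii' : i < i' := by
    have h1 := rel_of_decomp hp h (LOp.secondary i' u') (by simp)
    rcases h1 with h1 | ⟨h1, -⟩
    · exact h1
    · exact absurd h1 hne
  have hcmem : LOp.cleanup i ∈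
      ((List.finRange k).flatMap fun i => blocks i ++ [LOp.cleanup i]) := by
    rw [List.mem_flatMap]
    exact ⟨i, List.mem_finRange i, by simp⟩
  rw [h] at hcmem
  simp only [List.mem_append, List.mem_cons, reduceCtorEq, false_or, or_false] at hcmem
  rcases hcmem with h1 | h1 | h1
  · obtain ⟨s, t, rfl⟩ := List.append_of_mem h1
    have h2 := rel_of_decomp hp
      (show _ = s ++ LOp.cleanup i :: (t ++ LOp.secondary i u :: (l₂ ++ LOp.secondary i' u' :: l₃))
        by rw [h]; simp)
      (LOp.secondary i u) (by simp)
    rcases h2 with h2 | ⟨-, h2⟩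
    · exact absurd h2 (lt_irrefl _)
    · simp [LOp.isCleanup] at h2
  · obtain ⟨s, t, rfl⟩ := List.append_of_mem h1
    exact ⟨s, t, rfl⟩
  · have h2 := rel_of_decomp hp
      (show _ = (l₁ ++ LOp.secondary i u :: l₂) ++ LOp.secondary i' u' :: l₃ by rw [h]; simp)
      (LOp.cleanup i) h1
    rcases h2 with h2 | ⟨h2, -⟩
    · exact absurd (h2.trans hii') (lt_irrefl _)
    · exact absurd (show i' = i from h2).symm hne

end ListPart
section Invariant

variable {k : ℕ}

/-- Invariant holding during phase `i`. -/
def PhaseInv (i : Fin k) (σ : LState V k) : Prop :=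
  (∀ j j' : Fin k, j ≠ j' → Disjoint (σ.part j) (σ.part j')) ∧
  (∀ j : Fin k, ∀ e ∈ σ.part j, ∀ x y : V, e = s(x, y) → y ∈ σ.adj x →
    x ∈ σ.core ∨ (x ∈ σ.sec i ∧ y ∈ σ.core ∪ σ.sec i))

/-- Invariant holding after a clean-up. -/
def PostInv (σ : LState V k) : Prop :=
  (∀ j j' : Fin k, j ≠ j' → Disjoint (σ.part j) (σ.part j')) ∧
  (∀ j : Fin k, ∀ e ∈ σ.part j, ∀ x y : V, e = s(x, y) → y ∈ σ.adj x → x ∈ σ.core)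

theorem PostInv.phaseInv {σ : LState V k} (h : PostInv σ) (i : Fin k) : PhaseInv i σ :=
  ⟨h.1, fun j e he x y hxy hadj => Or.inl (h.2 j e he x y hxy hadj)⟩

theorem PhaseInv.step_secondary {σ τ : LState V k} {i : Fin k} {v : V}
    (h : PhaseInv i σ) (hs : LStep σ (.secondary i v) τ) : PhaseInv i τ := by
  cases hs with
  | secondary _ _ f hv =>
    obtain ⟨hdisj, hinv⟩ := h
    -- newly assigned edges are not in any old part
    have hnew : ∀ w ∈ σ.adj v ∩ (σ.core ∪ σ.sec i), ∀ j : Fin k, s(v, w) ∉ σ.part j := by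
      intro w hw j hmem
      rcases hinv j _ hmem v w rfl (Finset.mem_inter.mp hw).1 with hc | ⟨hc, -⟩
      · exact hv (Finset.mem_union_left _ hc)
      · exact hv (Finset.mem_union_right _ hc)
    constructor
    · intro j j' hjj'
      rw [Finset.disjoint_left]
      intro e he he'
      simp only [Finset.mem_union] at he he'
      rcases he with he | he <;> rcases he' with he' | he'
      · exact Finset.disjoint_left.mp (hdisj j j' hjj') he he'
      · obtain ⟨w, hw, rfl⟩ := Finset.mem_image.mp he'
        exact hnew w (Finset.mem_filter.mp hw).1 j he
      · obtain ⟨w, hw, rfl⟩ := Finset.mem_image.mp he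
        exact hnew w (Finset.mem_filter.mp hw).1 j' he'
      · obtain ⟨w, hw, rfl⟩ := Finset.mem_image.mp he
        obtain ⟨w', hw', heq⟩ := Finset.mem_image.mp he'
        have hww' : w' = w := by
          rcases Sym2.eq_iff.mp heq with ⟨-, h2⟩ | ⟨h1, h2⟩
          · exact h2
          · rw [h2]; exact h1
        apply hjj'
        rw [← (Finset.mem_filter.mp hw).2, ← (Finset.mem_filter.mp hw').2, hww']
    · intro j e he x y hxy hadj
      simp only [Finset.mem_union] at he
      have hsec : ∀ z, z ∈ σ.sec i →
          z ∈ Function.update σ.sec i (insert v (σ.sec i)) i := by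
        intro z hz
        rw [Function.update_self]
        exact Finset.mem_insert_of_mem hz
      have hvsec : v ∈ Function.update σ.sec i (insert v (σ.sec i)) i := by
        rw [Function.update_self]; exact Finset.mem_insert_self _ _
      rcases he with he | he
      · rcases hinv j e he x y hxy hadj with hc | ⟨h1, h2⟩
        · exact Or.inl hc
        · refine Or.inr ⟨hsec x h1, ?_⟩
          rcases Finset.mem_union.mp h2 with h2 | h2
          · exact Finset.mem_union_left _ h2
          · exact Finset.mem_union_right _ (hsec y h2)
      · obtain ⟨w, hw, heq⟩ := Finset.mem_image.mp he
        have hw2 := Finset.mem_inter.mp (Finset.mem_filter.mp hw).1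
        rw [hxy] at heq
        rcases Sym2.eq_iff.mp heq with ⟨h1, h2⟩ | ⟨h1, h2⟩
        · -- x = v, y = w
          refine Or.inr ⟨h1 ▸ hvsec, ?_⟩
          rcases Finset.mem_union.mp hw2.2 with hc | hc
          · exact Finset.mem_union_left _ (h2 ▸ hc)
          · exact Finset.mem_union_right _ (hsec y (h2 ▸ hc))
        · -- w = x, v = y
          rcases Finset.mem_union.mp hw2.2 with hc | hc
          · exact Or.inl (h2 ▸ hc)
          · exact Or.inr ⟨hsec x (h2 ▸ hc), Finset.mem_union_right _ (h1 ▸ hvsec)⟩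

theorem PhaseInv.step_core {σ τ : LState V k} {i i' : Fin k} {v : V}
    (h : PhaseInv i σ) (hs : LStep σ (.core i' v) τ) : PhaseInv i τ := by
  cases hs with
  | core _ _ hv =>
    refine ⟨h.1, fun j e he x y hxy hadj => ?_⟩
    rcases h.2 j e he x y hxy hadj with hc | ⟨h1, h2⟩
    · exact Or.inl (Finset.mem_insert_of_mem hc)
    · refine Or.inr ⟨h1, ?_⟩
      rcases Finset.mem_union.mp h2 with h2 | h2
      · exact Finset.mem_union_left _ (Finset.mem_insert_of_mem h2)
      · exact Finset.mem_union_right _ h2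

theorem PhaseInv.step_cleanup {σ τ : LState V k} {i : Fin k}
    (h : PhaseInv i σ) (hs : LStep σ (.cleanup i) τ) : PostInv τ := by
  cases hs with
  | cleanup =>
    refine ⟨h.1, fun j e he x y hxy hadj => ?_⟩
    dsimp only at he hadj ⊢
    by_cases hx : x ∈ σ.sec i
    · rw [show (if x ∈ σ.sec i then σ.adj x \ (σ.core ∪ σ.sec i) else σ.adj x)
          = σ.adj x \ (σ.core ∪ σ.sec i) from if_pos hx] at hadj
      rcases Finset.mem_sdiff.mp hadj with ⟨hy1, hy2⟩
      rcases h.2 j e he x y hxy hy1 with hc | ⟨-, h2⟩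
      · exact hc
      · exact absurd h2 hy2
    · rw [show (if x ∈ σ.sec i then σ.adj x \ (σ.core ∪ σ.sec i) else σ.adj x)
          = σ.adj x from if_neg hx] at hadj
      rcases h.2 j e he x y hxy hadj with hc | ⟨h1, -⟩
      · exact hc
      · exact absurd h1 hx

theorem PhaseInv.exec_block {i : Fin k} {l : List (LOp V k)}
    (hl : ∀ op ∈ l, op.phase = i ∧ op.isCleanup = false) :
    ∀ {σ τ : LState V k}, LExec σ l τ → PhaseInv i σ → PhaseInv i τ := by
  induction l with
  | nil => intro σ τ he h; cases he; exact h
  | cons op l ih =>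
      intro σ τ he h
      cases he with
      | cons hs he =>
          have hop := hl op List.mem_cons_self
          have hrest := fun op' h' => hl op' (List.mem_cons_of_mem _ h')
          match op, hop with
          | .secondary j w, hop =>
              have hji : j = i := hop.1
              subst hji
              exact ih hrest he (h.step_secondary hs)
          | .core j w, hop =>
              exact ih hrest he (h.step_core hs)
          | .cleanup j, hop => simp [LOp.isCleanup] at hop

theorem PostInv.exec_segments (blocks : Fin k → List (LOp V k))
    (hblocks : ∀ i : Fin k, ∀ op ∈ blocks i, op.phase = i ∧ op.isCleanup = false)
    (L : List (Fin k)) :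
    ∀ {σ τ : LState V k},
      LExec σ (L.flatMap fun i => blocks i ++ [LOp.cleanup i]) τ → PostInv σ → PostInv τ := by
  induction L with
  | nil => intro σ τ he h; cases he; exact h
  | cons i L ih =>
      intro σ τ he h
      rw [List.flatMap_cons] at he
      obtain ⟨σ₁, h1, h2⟩ := he.append_split
      obtain ⟨σ₂, h3, h4⟩ := h1.append_split
      have hph : PhaseInv i σ₂ := PhaseInv.exec_block (hblocks i) h3 (h.phaseInv i)
      have hpost : PostInv σ₁ := by
        cases h4 with
        | cons hs he' => cases he'; exact hph.step_cleanup hs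
      exact ih h2 hpost

theorem postInv_init (G : SimpleGraph V) [DecidableRel G.Adj] :
    PostInv (LState.init G k) := by
  constructor
  · intro j j' _
    simp [LState.init]
  · intro j e he
    simp [LState.init] at he

end Invariant
/-- In the NE algorithm with lazy edge removal, no edge is
assigned to two different partitions: for every execution (consisting, for
each phase `i` in order, of a block of phase-`i` operations followed by the
clean-up of phase `i`), the sets of edges assigned by distinct
`MoveToSecondary` operations are pairwise disjoint, so each edge of `G` is
assigned to at most one partition `p_i`.  In particular, removing, at the end
of each phase `i`, only the entries `u ∈ C ∪ S_i` from the adjacency lists of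
vertices `v ∈ S_i` (and never deleting assigned edges from the adjacency
lists of vertices moved to the core set) suffices to prevent any double
assignment. -/
theorem ne_lazy_removal_no_double_assignment
    (G : SimpleGraph V) [DecidableRel G.Adj] {k : ℕ} (hk : 1 ≤ k)
    (blocks : Fin k → List (LOp V k))
    (hblocks : ∀ i : Fin k, ∀ op ∈ blocks i,
        op.phase = i ∧ op.isCleanup = false)
    (ops : List (LOp V k))
    (hops : ops = (List.finRange k).flatMap fun i => blocks i ++ [LOp.cleanup i])
    (σf : LState V k)
    (hexec : LExec (LState.init G k) ops σf) :
    -- the edge sets assigned by distinct `MoveToSecondary` operations are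
    -- pairwise disjoint
    (∀ (l₁ l₂ l₃ : List (LOp V k)) (i i' : Fin k) (u u' : V)
        (σ₁ σ₂ : LState V k),
        ops = l₁ ++ LOp.secondary i u :: (l₂ ++ LOp.secondary i' u' :: l₃) →
        LExec (LState.init G k) l₁ σ₁ →
        LExec (LState.init G k) (l₁ ++ LOp.secondary i u :: l₂) σ₂ →
        Disjoint (assignedEdges σ₁ i u) (assignedEdges σ₂ i' u')) ∧
    -- hence each edge of `G` is assigned to at most one partition
    (∀ j j' : Fin k, j ≠ j' → Disjoint (σf.part j) (σf.part j')) ∧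
    (∀ e : Sym2 V, ∀ j j' : Fin k, e ∈ σf.part j → e ∈ σf.part j' → j = j') := by
  subst hops
  have hpost : PostInv σf :=
    PostInv.exec_segments blocks hblocks _ hexec (postInv_init G)
  refine ⟨?_, hpost.1, ?_⟩
  · intro l₁ l₂ l₃ i i' u u' σ₁ σ₂ hdec he1 he2
    rw [hdec] at hexec
    obtain ⟨σa, ha, hrest⟩ := hexec.append_split
    cases hrest with
    | @cons _ σb _ _ _ hsb hrest2 =>
      obtain ⟨σc, hc, hrest3⟩ := hrest2.append_split
      cases hrest3 with
      | cons hsd _ =>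
        have e1 : SEqv σ₁ σa := he1.seqv ha ⟨rfl, rfl, rfl⟩
        have e2 : SEqv σ₂ σc := he2.seqv (ha.append (LExec.cons hsb hc)) ⟨rfl, rfl, rfl⟩
        rw [assignedEdges_congr e1, assignedEdges_congr e2, Finset.disjoint_left]
        intro e hme hme'
        obtain ⟨w, hw, hew⟩ := Finset.mem_image.mp hme
        obtain ⟨w', hw', hew'⟩ := Finset.mem_image.mp hme'
        rw [Finset.mem_inter] at hw hw'
        have hu' : u' ∉ σc.core ∪ σc.sec i' := hsd.secondary_spec.1
        have hu_c : u ∈ σc.sec i := hc.sec_mono i hsb.secondary_spec.2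
        have hw_b : w ∈ σb.core ∪ σb.sec i :=
          Finset.union_subset_union hsb.core_mono (hsb.sec_mono i) hw.2
        have hw_c : w ∈ σc.core ∪ σc.sec i :=
          Finset.union_subset_union hc.core_mono (hc.sec_mono i) hw_b
        have hsym : (u' = u ∧ w' = w) ∨ (u' = w ∧ w' = u) :=
          Sym2.eq_iff.mp (hew'.trans hew.symm)
        rcases eq_or_ne i i' with rfl | hii
        · rcases hsym with ⟨hq1, -⟩ | ⟨hq1, -⟩
          · rw [hq1] at hu'
            exact hu' (Finset.mem_union_right _ hu_c)
          · rw [hq1] at hu'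
            exact hu' hw_c
        · obtain ⟨a, b, rfl⟩ := cleanup_between hblocks hdec hii
          obtain ⟨ρ, hρ, hrest4⟩ := hc.append_split
          cases hrest4 with
          | cons hcl hb =>
            have huρ : u ∈ ρ.sec i := hρ.sec_mono i hsb.secondary_spec.2
            have hwρ : w ∈ ρ.core ∪ ρ.sec i :=
              Finset.union_subset_union hρ.core_mono (hρ.sec_mono i) hw_b
            rcases hsym with ⟨hq1, hq2⟩ | ⟨hq1, hq2⟩ <;> rw [hq1, hq2] at hw'
            · -- the same oriented edge: removed from `adj u` by the clean-up
              have h1 : w ∉ σc.adj u := by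
                intro hmem
                have h2 := hb.adj_anti u hmem
                rw [hcl.cleanup_spec u huρ, Finset.mem_sdiff] at h2
                exact h2.2 hwρ
              exact h1 hw'.1
            · -- the reversed orientation
              rcases Finset.mem_union.mp hwρ with hwc | hws
              · rw [hq1] at hu'
                exact hu' (Finset.mem_union_left _ (hb.core_mono (hcl.core_mono hwc)))
              · have h1 : u ∉ σc.adj w := by
                  intro hmem
                  have h2 := hb.adj_anti w hmem
                  rw [hcl.cleanup_spec w hws, Finset.mem_sdiff] at h2
                  exact h2.2 (Finset.mem_union_right _ huρ)
                exact h1 hw'.1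
  · intro e j j' hj hj'
    by_contra hne
    exact Finset.disjoint_left.mp (hpost.1 j j' hne) hj hj'
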